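/- Tightness is hereditary: if (eₙ) is a tight basis of a Banach space X, then every infinite-dimensional closed subspace of X contains a basic sequence that is tight. In particular, a tight space contains no minimal subspace. -/

import Mathlib

open scoped BigOperators Classical

noncomputable section

section Prelude

variable {X : Type*} [NormedAddCommGroup X] [NormedSpace ℝ X]

/-- The vector with finitely supported coefficients `c` with respect to the sequence `e`. -/
def vecOf (e : ℕ → X) (c : ℕ →₀ ℝ) : X := c.sum fun n a => a • e n

/-- `c < d` : the supports of `c` and `d` are successive. -/
def FsuppLt (c d : ℕ →₀ ℝ) : Prop := ∀ a ∈ c.support, ∀ b ∈ d.support, a < b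

/-- The Gowers–Maurey function `f(n) = log₂(n+1)`. -/
def flog (n : ℕ) : ℝ := Real.logb 2 ((n : ℝ) + 1)

/-- Support of a functional with respect to the basis `e` (via biorthogonal functionals). -/
def fsupp (e : ℕ → X) (f : X →L[ℝ] ℝ) : Set ℕ := {n | f (e n) ≠ 0}

/-- Bimonotonicity of the basis `e`, expressed on finitely supported vectors:
projections onto intervals are contractive. -/
def Bimonotone (e : ℕ → X) : Prop :=
  ∀ (c : ℕ →₀ ℝ) (a b : ℕ), ‖vecOf e (c.filter fun n => n ∈ Finset.Icc a b)‖ ≤ ‖vecOf e c‖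

/-- Lower `f`-estimate for a general function `f`. -/
def LowerEst (e : ℕ → X) (f : ℝ → ℝ) : Prop :=
  ∀ (n : ℕ) (c : Fin n → ℕ →₀ ℝ), (∀ i j : Fin n, i < j → FsuppLt (c i) (c j)) →
    (1 / f (n : ℝ)) * ∑ i, ‖vecOf e (c i)‖ ≤ ‖∑ i, vecOf e (c i)‖

/-- Lower `f`-estimate with `f(n) = log₂(n+1)`. -/
def LowerFEst (e : ℕ → X) : Prop :=
  ∀ (n : ℕ) (c : Fin n → ℕ →₀ ℝ), (∀ i j : Fin n, i < j → FsuppLt (c i) (c j)) →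
    (1 / flog n) * ∑ i, ‖vecOf e (c i)‖ ≤ ‖∑ i, vecOf e (c i)‖

/-- `Y` embeds isomorphically into `Z` (linear isomorphism onto its image). -/
def Embeds (Y Z : Type*) [NormedAddCommGroup Y] [NormedSpace ℝ Y]
    [NormedAddCommGroup Z] [NormedSpace ℝ Z] : Prop :=
  ∃ T : Y →L[ℝ] Z, ∃ c : ℝ, 0 < c ∧ ∀ y, c * ‖y‖ ≤ ‖T y‖

/-- `Y` embeds into `Z` with constant `K` (i.e. `‖T‖ ⬝ ‖T⁻¹‖ ≤ K` after normalisation). -/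
def EmbedsWithConst (K : ℝ) (Y Z : Type*) [NormedAddCommGroup Y] [NormedSpace ℝ Y]
    [NormedAddCommGroup Z] [NormedSpace ℝ Z] : Prop :=
  ∃ T : Y →L[ℝ] Z, ∀ y, ‖y‖ ≤ ‖T y‖ ∧ ‖T y‖ ≤ K * ‖y‖

/-- The closed span `[eₙ : n ∉ S]`. -/
def spanCompl (e : ℕ → X) (S : Set ℕ) : Submodule ℝ X :=
  (Submodule.span ℝ (e '' Sᶜ)).topologicalClosure

/-- `Y` is tight in the basic sequence `e`. -/
def TightIn (e : ℕ → X) (Y : Type*) [NormedAddCommGroup Y] [NormedSpace ℝ Y] : Prop :=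
  ∃ I : ℕ → Finset ℕ, (∀ i j : ℕ, i < j → ∀ a ∈ I i, ∀ b ∈ I j, a < b) ∧
    ∀ A : Set ℕ, A.Infinite → ¬ Embeds Y ↥(spanCompl e (⋃ i ∈ A, (I i : Set ℕ)))

/-- The basis `e` is tight: every infinite-dimensional Banach space is tight in it. -/
def TightBasis (e : ℕ → X) : Prop :=
  ∀ (Y : Type) [NormedAddCommGroup Y] [NormedSpace ℝ Y] [CompleteSpace Y],
    ¬ FiniteDimensional ℝ Y → TightIn e Y

end Prelude

section AuxSec

namespace Stmt4Aux

open Finset Submodule Set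

variable {X : Type} [NormedAddCommGroup X] [NormedSpace ℝ X]

/-- step constants -/
def del (n : ℕ) : ℝ := (1/4) * (1/2)^n
def eta (n : ℕ) : ℝ := (1/16) * (1/2)^n

lemma del_pos (n : ℕ) : 0 < del n := by unfold del; positivity
lemma eta_pos (n : ℕ) : 0 < eta n := by unfold eta; positivity
lemma del_le_one (n : ℕ) : del n ≤ 1 := by
  unfold del
  have h : (1/2:ℝ)^n ≤ 1 := pow_le_one₀ (by norm_num) (by norm_num)
  nlinarith

lemma summable_half : Summable (fun n : ℕ => (1/2:ℝ)^n) :=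
  summable_geometric_of_lt_one (by norm_num) (by norm_num)

lemma summable_del : Summable del := by
  have h := summable_half.mul_left (1/4:ℝ)
  unfold del
  exact h

lemma tsum_del : ∑' n, del n = 1/2 := by
  unfold del
  rw [tsum_mul_left, tsum_geometric_two]
  norm_num

lemma exp_half_lt_two : Real.exp (1/2) < 2 := by
  have h : Real.exp (1/2) * Real.exp (1/2) = Real.exp 1 := by
    rw [← Real.exp_add]; norm_num
  nlinarith [Real.exp_one_lt_d9, Real.exp_pos (1/2 : ℝ)]

lemma prod_del_le (s : Finset ℕ) : ∏ j ∈ s, (1 + del j) ≤ 2 := by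
  have h1 : ∏ j ∈ s, (1 + del j) ≤ ∏ j ∈ s, Real.exp (del j) := by
    refine Finset.prod_le_prod (fun i _ => by have := del_pos i; linarith) (fun i _ => ?_)
    have := Real.add_one_le_exp (del i); linarith
  have h2 : ∏ j ∈ s, Real.exp (del j) = Real.exp (∑ j ∈ s, del j) := (Real.exp_sum s del).symm
  have h3 : ∑ j ∈ s, del j ≤ 1/2 := by
    refine le_trans (Summable.sum_le_tsum s (fun i _ => (del_pos i).le) summable_del) tsum_del.le
  have h4 : Real.exp (∑ j ∈ s, del j) ≤ Real.exp (1/2) := Real.exp_le_exp.mpr h3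
  linarith [exp_half_lt_two]

/-- closed span of the tail of `e` -/
def Vt (e : ℕ → X) (m : ℕ) : Submodule ℝ X :=
  (Submodule.span ℝ (e '' Set.Ici m)).topologicalClosure

def vecOf (e : ℕ → X) (c : ℕ →₀ ℝ) : X := c.sum fun n a => a • e n

lemma vecOf_eq (e : ℕ → X) (c : ℕ →₀ ℝ) :
    vecOf e c = Finsupp.linearCombination ℝ e c :=
  (Finsupp.linearCombination_apply _ _).symm

lemma vecOf_mem_span (e : ℕ → X) {s : Set ℕ} {c : ℕ →₀ ℝ}
    (h : (c.support : Set ℕ) ⊆ s) : vecOf e c ∈ Submodule.span ℝ (e '' s) := by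
  rw [vecOf, Finsupp.sum]
  exact sum_mem fun n hn => Submodule.smul_mem _ _ (subset_span ⟨n, h hn, rfl⟩)

/-- annihilator of the tail span -/
def ann (e : ℕ → X) (m : ℕ) : Submodule ℝ (X →L[ℝ] ℝ) where
  carrier := {ψ | ∀ x ∈ Vt e m, ψ x = 0}
  add_mem' := by
    intro a b ha hb x hx
    simp [ContinuousLinearMap.add_apply, ha x hx, hb x hx]
  zero_mem' := by intro x hx; rfl
  smul_mem' := by
    intro c ψ hψ x hx
    simp [hψ x hx]

lemma ann_findim (e : ℕ → X)
    (hbasis : (Submodule.span ℝ (Set.range e)).topologicalClosure = ⊤) (m : ℕ) :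
    FiniteDimensional ℝ (ann e m) := by
  let L : ann e m →ₗ[ℝ] (Fin m → ℝ) :=
    { toFun := fun ψ => fun j => (ψ : X →L[ℝ] ℝ) (e j)
      map_add' := by intro a b; ext j; simp
      map_smul' := by intro r a; ext j; simp }
  refine FiniteDimensional.of_injective L ((@LinearMap.ker_eq_bot ℝ ℝ (ann e m) (Fin m → ℝ) _ _ (ann e m).addCommGroup _ _ _ _ L).mp ((Submodule.eq_bot_iff _).mpr
    fun ψ hψ => ?_))
  have hψ0 : ∀ j : Fin m, (ψ : X →L[ℝ] ℝ) (e j) = 0 := fun j => congrFun (LinearMap.mem_ker.mp hψ) j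
  have hψe : ∀ k : ℕ, (ψ : X →L[ℝ] ℝ) (e k) = 0 := by
    intro k
    by_cases hk : k < m
    · exact hψ0 ⟨k, hk⟩
    · exact ψ.2 (e k) (Submodule.le_topologicalClosure _
        (subset_span ⟨k, by simpa using le_of_not_gt hk, rfl⟩))
  have hker : (Submodule.span ℝ (Set.range e)).topologicalClosure ≤
      LinearMap.ker ((ψ : X →L[ℝ] ℝ) : X →ₗ[ℝ] ℝ) := by
    apply Submodule.topologicalClosure_minimal
    · rw [Submodule.span_le]
      rintro y ⟨k, rfl⟩
      exact LinearMap.mem_ker.mpr (hψe k)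
    · exact ContinuousLinearMap.isClosed_ker _
  rw [hbasis] at hker
  apply Subtype.ext
  ext x
  simpa using LinearMap.mem_ker.mp (hker (Submodule.mem_top (x := x)))


theorem exists_tail_ker (e : ℕ → X) (Z : Submodule ℝ X)
    (hbasis : (Submodule.span ℝ (Set.range e)).topologicalClosure = ⊤)
    (hZ : ¬ FiniteDimensional ℝ Z) (m : ℕ) (ι : Type) [Finite ι] (φ : ι → X →L[ℝ] ℝ) :
    ∃ z : X, z ∈ Z ∧ z ∈ Vt e m ∧ z ≠ 0 ∧ ∀ i, φ i z = 0 := by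
  haveI := ann_findim e hbasis m
  haveI := Fintype.ofFinite ι
  set r := Module.finrank ℝ (ann e m) with hr
  haveI : Module.Free ℝ (ann e m) := @Module.Free.of_divisionRing ℝ (ann e m) _ (ann e m).addCommGroup (ann e m).module
  let bA := Module.finBasis ℝ (ann e m)
  let Ψ : Z →ₗ[ℝ] ((Fin r → ℝ) × (ι → ℝ)) :=
    LinearMap.prod
      (LinearMap.pi fun i => ((bA i : X →L[ℝ] ℝ).toLinearMap).comp Z.subtype)
      (LinearMap.pi fun i => ((φ i).toLinearMap).comp Z.subtype)
  have hker : LinearMap.ker Ψ ≠ ⊥ := by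
    intro h
    exact hZ (FiniteDimensional.of_injective Ψ (LinearMap.ker_eq_bot.mp h))
  obtain ⟨z', hz'ker, hz'ne⟩ := (Submodule.ne_bot_iff _).mp hker
  have hΨ := LinearMap.mem_ker.mp hz'ker
  have h1 : ∀ i : Fin r, (bA i : X →L[ℝ] ℝ) (z' : X) = 0 := by
    intro i
    exact congrFun (congrArg Prod.fst hΨ) i
  have h2 : ∀ i, φ i (z' : X) = 0 := by
    intro i
    exact congrFun (congrArg Prod.snd hΨ) i
  refine ⟨(z' : X), z'.2, ?_, by simpa using hz'ne, h2⟩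
  by_contra hzV
  obtain ⟨f, u, hfu, huz⟩ := geometric_hahn_banach_closed_point (Vt e m).convex
    (Submodule.isClosed_topologicalClosure _) hzV
  have hf0 : ∀ w ∈ Vt e m, f w = 0 := by
    intro w hw
    by_contra hfw
    have hlt := hfu (((|u|+1)/(f w)) • w) (Submodule.smul_mem _ _ hw)
    rw [map_smul, smul_eq_mul, div_mul_cancel₀ _ hfw] at hlt
    have := le_abs_self u
    linarith
  have hfA : f ∈ ann e m := hf0
  have hu0 : 0 < u := by simpa using hfu 0 (zero_mem _)
  let ev : ann e m →ₗ[ℝ] ℝ :=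
    { toFun := fun ψ => (ψ : X →L[ℝ] ℝ) (z' : X)
      map_add' := by intro a b; simp
      map_smul' := by intro r a; simp }
  have hev : ev = 0 := bA.ext fun i => by simpa [ev] using h1 i
  have hfz : f (z' : X) = 0 := by
    rw [LinearMap.ext_iff] at hev
    simpa [ev] using hev ⟨f, hfA⟩
  linarith

theorem net_step (e : ℕ → X) (Z : Submodule ℝ X)
    (hbasis : (Submodule.span ℝ (Set.range e)).topologicalClosure = ⊤)
    (hZ : ¬ FiniteDimensional ℝ Z) {F : Submodule ℝ X} (hF : FiniteDimensional ℝ F)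
    {δ : ℝ} (hδ0 : 0 < δ) (hδ1 : δ ≤ 1) (m : ℕ) :
    ∃ z : X, z ∈ Z ∧ z ∈ Vt e m ∧ ‖z‖ = 1 ∧
      ∀ f ∈ F, ∀ t : ℝ, ‖f‖ ≤ (1+δ) * ‖f + t • z‖ := by
  haveI := hF
  set K : Set X := (Subtype.val : F → X) '' (Metric.sphere (0 : F) 1) with hKdef
  have hKc : IsCompact K := (isCompact_sphere (0:F) 1).image continuous_subtype_val
  have hKnorm : ∀ y ∈ K, ‖y‖ = 1 := by
    rintro y ⟨w, hw, rfl⟩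
    have : ‖w‖ = 1 := by simpa [dist_zero_right] using hw
    simpa [Submodule.coe_norm] using this
  have hcov : K ⊆ ⋃ y ∈ K, Metric.ball y (δ/2) := fun y hy =>
    Set.mem_biUnion hy (Metric.mem_ball_self (by linarith))
  obtain ⟨b, hbK, hbfin, hcover⟩ := hKc.elim_finite_subcover_image
    (fun y _ => Metric.isOpen_ball) hcov
  haveI : Finite b := hbfin.to_subtype
  have hbne : ∀ y : b, (y : X) ≠ 0 := by
    intro y h
    have h1 := hKnorm y (hbK y.2)
    rw [h] at h1
    simp at h1
  let φ : b → (X →L[ℝ] ℝ) := fun y => (exists_dual_vector ℝ (y : X) (norm_ne_zero_iff.mpr (hbne y))).choose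
  have hφ : ∀ y : b, ‖φ y‖ = 1 ∧ φ y (y : X) = ‖(y:X)‖ := fun y =>
    (exists_dual_vector ℝ (y : X) (norm_ne_zero_iff.mpr (hbne y))).choose_spec
  obtain ⟨z₀, hz₀Z, hz₀V, hz₀ne, hz₀φ⟩ := exists_tail_ker e Z hbasis hZ m b φ
  have main : ∀ z : X, ‖z‖ = 1 → (∀ y : b, φ y z = 0) →
      ∀ f ∈ F, ∀ t : ℝ, ‖f‖ ≤ (1+δ) * ‖f + t • z‖ := by
    intro z hz1 hzφ
    have hball : ∀ u ∈ K, ∀ s : ℝ, 1 - δ/2 ≤ ‖u + s • z‖ := by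
      intro u huK s
      obtain ⟨y, hyb, hyball⟩ := Set.mem_iUnion₂.mp (hcover huK)
      have hy1 : ‖y‖ = 1 := hKnorm y (hbK hyb)
      have hψ1 : ‖φ ⟨y, hyb⟩‖ = 1 := (hφ _).1
      have hψy : φ ⟨y, hyb⟩ y = 1 := by
        have := (hφ ⟨y, hyb⟩).2
        rwa [hy1] at this
      have habs : ∀ w : X, φ ⟨y, hyb⟩ w ≤ ‖w‖ := by
        intro w
        calc φ ⟨y, hyb⟩ w ≤ |φ ⟨y, hyb⟩ w| := le_abs_self _
        _ ≤ ‖φ ⟨y, hyb⟩‖ * ‖w‖ := by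
            rw [← Real.norm_eq_abs]
            exact (φ ⟨y, hyb⟩).le_opNorm w
        _ = ‖w‖ := by rw [hψ1, one_mul]
      have hdist : ‖u - y‖ < δ/2 := by
        have := Metric.mem_ball.mp hyball
        rwa [dist_eq_norm] at this
      have h1 : |φ ⟨y, hyb⟩ (u - y)| ≤ ‖u - y‖ := by
        rw [← Real.norm_eq_abs]
        calc ‖φ ⟨y, hyb⟩ (u-y)‖ ≤ ‖φ ⟨y, hyb⟩‖ * ‖u - y‖ := (φ ⟨y, hyb⟩).le_opNorm _
        _ = ‖u - y‖ := by rw [hψ1, one_mul]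
      have h2 : φ ⟨y, hyb⟩ u = φ ⟨y, hyb⟩ y + φ ⟨y, hyb⟩ (u - y) := by
        rw [← map_add]
        congr 1
        abel
      have h3 := (abs_le.mp h1).1
      have h4 : φ ⟨y, hyb⟩ ((u + s • z)) = φ ⟨y, hyb⟩ u := by
        rw [map_add, map_smul, hzφ ⟨y, hyb⟩, smul_zero, add_zero]
      calc 1 - δ/2 ≤ φ ⟨y, hyb⟩ u := by rw [h2, hψy]; linarith
      _ = φ ⟨y, hyb⟩ (u + s • z) := h4.symm
      _ ≤ ‖u + s • z‖ := habs _
    intro f hf t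
    rcases eq_or_ne f 0 with rfl | hfne
    · have : (0:ℝ) ≤ (1+δ) * ‖(0:X) + t • z‖ := by positivity
      simpa using this
    · have hnf : (0:ℝ) < ‖f‖ := norm_pos_iff.mpr hfne
      have huK : ‖f‖⁻¹ • f ∈ K := by
        refine ⟨⟨‖f‖⁻¹ • f, F.smul_mem _ hf⟩, ?_, rfl⟩
        have : ‖‖f‖⁻¹ • f‖ = 1 := norm_smul_inv_norm hfne
        simpa [dist_zero_right, Submodule.coe_norm] using this
      have h3 := hball _ huK (t * ‖f‖⁻¹)
      have heq : ‖f‖ • (‖f‖⁻¹ • f + (t * ‖f‖⁻¹) • z) = f + t • z := by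
        rw [smul_add, smul_inv_smul₀ (ne_of_gt hnf), smul_smul]
        congr 1
        rw [show ‖f‖ * (t * ‖f‖⁻¹) = t by field_simp]
      have hkey : (1 - δ/2) * ‖f‖ ≤ ‖f + t • z‖ := by
        calc (1-δ/2) * ‖f‖ ≤ ‖‖f‖⁻¹ • f + (t*‖f‖⁻¹)•z‖ * ‖f‖ :=
          mul_le_mul_of_nonneg_right h3 hnf.le
        _ = ‖f + t•z‖ := by
            rw [← heq, norm_smul, Real.norm_eq_abs, abs_of_pos hnf]
            ring
      nlinarith [mul_le_mul_of_nonneg_left hkey (by linarith : (0:ℝ) ≤ 1+δ),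
        mul_nonneg (mul_nonneg hδ0.le (by linarith : (0:ℝ) ≤ 1 - δ)) hnf.le]
  refine ⟨‖z₀‖⁻¹ • z₀, Z.smul_mem _ hz₀Z, (Vt e m).smul_mem _ hz₀V,
    norm_smul_inv_norm hz₀ne, main _ (norm_smul_inv_norm hz₀ne) (fun y => by
      rw [map_smul, hz₀φ y, smul_zero])⟩


def Good (e : ℕ → X) (Z : Submodule ℝ X) (n : ℕ) (prev : Fin n → X × (ℕ →₀ ℝ))
    (p : X × (ℕ →₀ ℝ)) : Prop :=
  p.1 ∈ Z ∧ ‖p.1‖ = 1 ∧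
  (∀ f ∈ Submodule.span ℝ (Set.range fun i => (prev i).1), ∀ t : ℝ,
    ‖f‖ ≤ (1 + del n) * ‖f + t • p.1‖) ∧
  ‖p.1 - vecOf e p.2‖ ≤ eta n ∧
  ∀ k ∈ p.2.support, (Finset.univ.sup fun i : Fin n => (prev i).2.support.sup id + 1) ≤ k

theorem stepEx (e : ℕ → X) (Z : Submodule ℝ X)
    (hbasis : (Submodule.span ℝ (Set.range e)).topologicalClosure = ⊤)
    (hZ : ¬ FiniteDimensional ℝ Z) (n : ℕ) (prev : Fin n → X × (ℕ →₀ ℝ)) :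
    ∃ p, Good e Z n prev p := by
  have hF : FiniteDimensional ℝ (Submodule.span ℝ (Set.range fun i => (prev i).1)) :=
    FiniteDimensional.span_of_finite ℝ (Set.finite_range _)
  set M := Finset.univ.sup fun i : Fin n => (prev i).2.support.sup id + 1 with hM
  obtain ⟨z, hzZ, hzV, hz1, hnet⟩ := net_step e Z hbasis hZ hF (del_pos n) (del_le_one n) M
  have hz' : z ∈ closure ((Submodule.span ℝ (e '' Set.Ici M) : Submodule ℝ X) : Set X) := by
    rw [← Submodule.topologicalClosure_coe]
    exact hzV
  obtain ⟨y, hy, hdist⟩ := Metric.mem_closure_iff.mp hz' (eta n) (eta_pos n)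
  obtain ⟨l, hl, hly⟩ := (Finsupp.mem_span_image_iff_linearCombination ℝ).mp hy
  refine ⟨(z, l), hzZ, hz1, hnet, ?_, ?_⟩
  · show ‖z - vecOf e l‖ ≤ eta n
    rw [vecOf_eq, hly, ← dist_eq_norm]
    exact hdist.le
  · intro k hk
    exact (Finsupp.mem_supported ℝ l).mp hl hk

theorem exists_good_seq (e : ℕ → X) (Z : Submodule ℝ X)
    (hbasis : (Submodule.span ℝ (Set.range e)).topologicalClosure = ⊤)
    (hZ : ¬ FiniteDimensional ℝ Z) :
    ∃ (v : ℕ → X) (c : ℕ → (ℕ →₀ ℝ)),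
      (∀ n, v n ∈ Z) ∧ (∀ n, ‖v n‖ = 1) ∧
      (∀ n, ∀ f ∈ Submodule.span ℝ (v '' Set.Iio n), ∀ t : ℝ,
        ‖f‖ ≤ (1 + del n) * ‖f + t • v n‖) ∧
      (∀ n, ‖v n - vecOf e (c n)‖ ≤ eta n) ∧
      (∀ n m', n < m' → ∀ a ∈ (c n).support, ∀ b ∈ (c m').support, a < b) := by
  have hstep := stepEx e Z hbasis hZ
  let g : (n : ℕ) → Fin n → X × (ℕ →₀ ℝ) := fun n =>
    Nat.rec (motive := fun k => Fin k → X × (ℕ →₀ ℝ)) Fin.elim0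
      (fun k ih => Fin.snoc ih (hstep k ih).choose) n
  let w : ℕ → X × (ℕ →₀ ℝ) := fun n => (hstep n (g n)).choose
  have hg : ∀ n, g (n+1) = Fin.snoc (g n) (w n) := fun n => rfl
  have hcoh : ∀ n (i : Fin n), g n i = w i.val := by
    intro n
    induction n with
    | zero => exact fun i => i.elim0
    | succ k ih =>
      intro i
      refine Fin.lastCases ?_ ?_ i
      · show g (k+1) (Fin.last k) = w (Fin.last k).val
        rw [hg, Fin.snoc_last]
      · intro j
        show g (k+1) j.castSucc = w j.castSucc.val
        rw [hg, Fin.snoc_castSucc, ih j, Fin.coe_castSucc]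
  have hGood : ∀ n, Good e Z n (g n) (w n) := fun n => (hstep n (g n)).choose_spec
  refine ⟨fun n => (w n).1, fun n => (w n).2, fun n => (hGood n).1, fun n => (hGood n).2.1,
    ?_, fun n => (hGood n).2.2.2.1, ?_⟩
  · intro n f hf t
    apply (hGood n).2.2.1 f ?_ t
    have hre : (Set.range fun i : Fin n => (g n i).1) = (fun k => (w k).1) '' Set.Iio n := by
      ext x
      constructor
      · rintro ⟨i, rfl⟩
        exact ⟨i.val, i.2, congrArg Prod.fst (hcoh n i).symm⟩
      · rintro ⟨k, hk, rfl⟩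
        exact ⟨⟨k, hk⟩, congrArg Prod.fst (hcoh n ⟨k, hk⟩)⟩
    rw [show (Submodule.span ℝ (Set.range fun i : Fin n => (g n i).1)) =
      Submodule.span ℝ ((fun k => (w k).1) '' Set.Iio n) by rw [hre]]
    exact hf
  · intro n m' hnm a ha b hb
    have h1 := (hGood m').2.2.2.2 b hb
    have h2 : ((w n).2.support.sup id + 1 : ℕ) ≤
        Finset.univ.sup fun i : Fin m' => (g m' i).2.support.sup id + 1 := by
      have h3 := Finset.le_sup (f := fun i : Fin m' => (g m' i).2.support.sup id + 1)
        (Finset.mem_univ (⟨n, hnm⟩ : Fin m'))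
      have h4 : (g m' ⟨n, hnm⟩).2.support.sup id + 1 = (w n).2.support.sup id + 1 :=
        congrArg (fun p : X × (ℕ →₀ ℝ) => p.2.support.sup id + 1) (hcoh m' ⟨n, hnm⟩)
      exact le_trans (le_of_eq h4.symm) h3
    have h4 : a ≤ (w n).2.support.sup id := Finset.le_sup (f := id) ha
    omega

theorem basic_ineq (v : ℕ → X)
    (hnet : ∀ n, ∀ f ∈ Submodule.span ℝ (v '' Set.Iio n), ∀ t : ℝ,
      ‖f‖ ≤ (1 + del n) * ‖f + t • v n‖) :
    ∀ (a : ℕ → ℝ) (m N : ℕ), m ≤ N →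
      ‖∑ i ∈ Finset.range m, a i • v i‖ ≤ 2 * ‖∑ i ∈ Finset.range N, a i • v i‖ := by
  intro a m N hmN
  have hQmem : ∀ n, (∑ i ∈ Finset.range n, a i • v i) ∈
      Submodule.span ℝ (v '' Set.Iio n) := fun n =>
    sum_mem fun i hi => Submodule.smul_mem _ _ (subset_span ⟨i, Finset.mem_range.mp hi, rfl⟩)
  have hstep : ∀ n, ‖∑ i ∈ Finset.range n, a i • v i‖ ≤
      (1 + del n) * ‖∑ i ∈ Finset.range (n+1), a i • v i‖ := by
    intro n
    have := hnet n _ (hQmem n) (a n)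
    rwa [← Finset.sum_range_succ] at this
  have hmain : ∀ N', m ≤ N' → ‖∑ i ∈ Finset.range m, a i • v i‖ ≤
      (∏ j ∈ Finset.Ico m N', (1 + del j)) * ‖∑ i ∈ Finset.range N', a i • v i‖ := by
    refine Nat.le_induction ?_ ?_
    · simp
    · intro n hn ih
      have hprodpos : (0:ℝ) ≤ ∏ j ∈ Finset.Ico m n, (1 + del j) :=
        Finset.prod_nonneg fun j _ => by have := del_pos j; linarith
      calc ‖∑ i ∈ Finset.range m, a i • v i‖
          ≤ (∏ j ∈ Finset.Ico m n, (1 + del j)) * ‖∑ i ∈ Finset.range n, a i • v i‖ := ih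
      _ ≤ (∏ j ∈ Finset.Ico m n, (1 + del j)) *
            ((1 + del n) * ‖∑ i ∈ Finset.range (n+1), a i • v i‖) :=
          mul_le_mul_of_nonneg_left (hstep n) hprodpos
      _ = (∏ j ∈ Finset.Ico m (n+1), (1 + del j)) * ‖∑ i ∈ Finset.range (n+1), a i • v i‖ := by
          rw [Finset.prod_Ico_succ_top hn]
          ring
  calc ‖∑ i ∈ Finset.range m, a i • v i‖
      ≤ (∏ j ∈ Finset.Ico m N, (1 + del j)) * ‖∑ i ∈ Finset.range N, a i • v i‖ := hmain N hmN
  _ ≤ 2 * ‖∑ i ∈ Finset.range N, a i • v i‖ :=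
      mul_le_mul_of_nonneg_right (prod_del_le _) (norm_nonneg _)

theorem indep_of_basic (v : ℕ → X) (hnorm : ∀ n, ‖v n‖ = 1)
    (hbin : ∀ (a : ℕ → ℝ) (m N : ℕ), m ≤ N →
      ‖∑ i ∈ Finset.range m, a i • v i‖ ≤ 2 * ‖∑ i ∈ Finset.range N, a i • v i‖) :
    LinearIndependent ℝ v := by
  rw [linearIndependent_iff']
  intro s gcoef hsum i his
  set a : ℕ → ℝ := fun k => if k ∈ s then gcoef k else 0 with ha
  set N := s.sup id + 1 with hN
  have hsub : s ⊆ Finset.range N := fun x hx =>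
    Finset.mem_range.mpr (Nat.lt_succ_of_le (Finset.le_sup (f := id) hx))
  have hsumN : ∑ k ∈ Finset.range N, a k • v k = 0 := by
    calc ∑ k ∈ Finset.range N, a k • v k = ∑ k ∈ s, a k • v k :=
      (Finset.sum_subset hsub (fun x _ hxs => by simp [ha, if_neg hxs])).symm
    _ = ∑ k ∈ s, gcoef k • v k := Finset.sum_congr rfl (fun x hx => by simp [ha, if_pos hx])
    _ = 0 := hsum
  have hiN : i + 1 ≤ N := Nat.succ_le_succ (Finset.le_sup (f := id) his)
  have h1 := hbin a (i+1) N hiN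
  have h2 := hbin a i N (le_trans (Nat.le_succ i) hiN)
  rw [hsumN, norm_zero, mul_zero] at h1 h2
  have h4 : a i • v i = (∑ k ∈ Finset.range (i+1), a k • v k) -
      (∑ k ∈ Finset.range i, a k • v k) := by
    rw [Finset.sum_range_succ]
    abel
  have h5 : ‖a i • v i‖ ≤ ‖∑ k ∈ Finset.range (i+1), a k • v k‖ +
      ‖∑ k ∈ Finset.range i, a k • v k‖ := h4 ▸ norm_sub_le _ _
  rw [norm_smul, hnorm, mul_one, Real.norm_eq_abs] at h5
  have h6 : a i = gcoef i := by simp [ha, if_pos his]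
  rw [← h6]
  have := abs_nonneg (a i)
  have : |a i| = 0 := le_antisymm (by linarith) (abs_nonneg _)
  exact abs_eq_zero.mp this

theorem coeff_bound (v : ℕ → X) (hnorm : ∀ n, ‖v n‖ = 1)
    (hbin : ∀ (a : ℕ → ℝ) (m N : ℕ), m ≤ N →
      ‖∑ i ∈ Finset.range m, a i • v i‖ ≤ 2 * ‖∑ i ∈ Finset.range N, a i • v i‖)
    (B : Set ℕ) (l : ↥B →₀ ℝ) (j : ↥B) :
    |l j| ≤ 4 * ‖Finsupp.linearCombination ℝ (fun p : ↥B => v ↑p) l‖ := by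
  set u := Finsupp.linearCombination ℝ (fun p : ↥B => v ↑p) l with hu
  set a : ℕ → ℝ := fun n => if h : n ∈ B then l ⟨n, h⟩ else 0 with ha
  set F := l.support.image (Subtype.val : ↥B → ℕ) with hF
  set N := F.sup id + (j : ℕ) + 2 with hN
  have hFN : F ⊆ Finset.range N := fun x hx => by
    have := Finset.le_sup (f := id) hx
    simp only [id] at this
    exact Finset.mem_range.mpr (by omega)
  have hsum : ∑ k ∈ Finset.range N, a k • v k = u := by
    calc ∑ k ∈ Finset.range N, a k • v k = ∑ k ∈ F, a k • v k := by
          refine (Finset.sum_subset hFN ?_).symm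
          intro x _ hxF
          by_cases hxB : x ∈ B
          · have hns : (⟨x, hxB⟩ : ↥B) ∉ l.support := by
              intro hmem
              exact hxF (Finset.mem_image.mpr ⟨⟨x, hxB⟩, hmem, rfl⟩)
            simp [ha, dif_pos hxB, Finsupp.notMem_support_iff.mp hns]
          · simp [ha, dif_neg hxB]
    _ = ∑ p ∈ l.support, a ↑p • v ↑p :=
        Finset.sum_image (fun x _ y _ h => Subtype.val_injective h)
    _ = ∑ p ∈ l.support, l p • v ↑p := by
        refine Finset.sum_congr rfl (fun p _ => ?_)
        congr 1
        simp [ha]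
    _ = u := by rw [hu, Finsupp.linearCombination_apply, Finsupp.sum]
  have hjN : ((j:ℕ) + 1) ≤ N := by omega
  have h1 := hbin a ((j:ℕ)+1) N hjN
  have h2 := hbin a (j:ℕ) N (by omega)
  rw [hsum] at h1 h2
  have h4 : a ↑j • v ↑j = (∑ k ∈ Finset.range ((j:ℕ)+1), a k • v k) -
      (∑ k ∈ Finset.range (j:ℕ), a k • v k) := by
    rw [Finset.sum_range_succ]
    abel
  have h5 : ‖a ↑j • v ↑j‖ ≤ ‖∑ k ∈ Finset.range ((j:ℕ)+1), a k • v k‖ +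
      ‖∑ k ∈ Finset.range (j:ℕ), a k • v k‖ := h4 ▸ norm_sub_le _ _
  rw [norm_smul, hnorm, mul_one, Real.norm_eq_abs] at h5
  have h6 : a ↑j = l j := by simp [ha]
  rw [← h6]
  linarith


theorem transfer [CompleteSpace X] (e : ℕ → X) (Z : Submodule ℝ X)
    (htight : TightBasis e)
    (v : ℕ → X) (c : ℕ → ℕ →₀ ℝ) (hmem : ∀ n, v n ∈ Z) (hnorm : ∀ n, ‖v n‖ = 1)
    (hbin : ∀ (a : ℕ → ℝ) (m N : ℕ), m ≤ N →
      ‖∑ i ∈ Finset.range m, a i • v i‖ ≤ 2 * ‖∑ i ∈ Finset.range N, a i • v i‖)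
    (happrox : ∀ n, ‖v n - vecOf e (c n)‖ ≤ eta n)
    (hsucc : ∀ n m', n < m' → ∀ a ∈ (c n).support, ∀ b ∈ (c m').support, a < b) :
    TightBasis (fun n => (⟨v n, hmem n⟩ : Z)) := by
  intro Y _ _ _ hY
  obtain ⟨I, hIsucc, hIprop⟩ := htight Y hY
  have hIdisj : ∀ i j a, i ≠ j → a ∈ I i → a ∈ I j → False := by
    intro i j a hij hi hj
    rcases hij.lt_or_gt with h | h
    · exact lt_irrefl a (hIsucc i j h a hi a hj)
    · exact lt_irrefl a (hIsucc j i h a hj a hi)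
  have hEdisj : ∀ n m a, n ≠ m → a ∈ (c n).support → a ∈ (c m).support → False := by
    intro n m a hnm hn hm
    rcases hnm.lt_or_gt with h | h
    · exact lt_irrefl a (hsucc n m h a hn a hm)
    · exact lt_irrefl a (hsucc m n h a hm a hn)
  have hJfin : ∀ i, Set.Finite {n | ((c n).support ∩ I i).Nonempty} := by
    intro i
    rw [← Set.finite_coe_iff]
    haveI : Finite ((I i : Finset ℕ) : Set ℕ) := (I i).finite_toSet.to_subtype
    refine Finite.of_injective (fun n : {n | ((c n).support ∩ I i).Nonempty} =>
      (⟨n.2.choose, Finset.mem_coe.mpr (Finset.mem_inter.mp n.2.choose_spec).2⟩ :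
        ((I i : Finset ℕ) : Set ℕ))) ?_
    intro n m' hnm
    by_contra hne
    have hval : n.2.choose = m'.2.choose := congrArg Subtype.val hnm
    refine hEdisj _ _ _ (fun h => hne (Subtype.ext h))
      (Finset.mem_inter.mp n.2.choose_spec).1 ?_
    rw [hval]
    exact (Finset.mem_inter.mp m'.2.choose_spec).1
  have hLfin : ∀ n, Set.Finite {i | ((c n).support ∩ I i).Nonempty} := by
    intro n
    rw [← Set.finite_coe_iff]
    haveI : Finite (((c n).support : Finset ℕ) : Set ℕ) := (c n).support.finite_toSet.to_subtype
    refine Finite.of_injective (fun i : {i | ((c n).support ∩ I i).Nonempty} =>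
      (⟨i.2.choose, Finset.mem_coe.mpr (Finset.mem_inter.mp i.2.choose_spec).1⟩ :
        (((c n).support : Finset ℕ) : Set ℕ))) ?_
    intro i j hij
    by_contra hne
    have hval : i.2.choose = j.2.choose := congrArg Subtype.val hij
    refine hIdisj _ _ _ (fun h => hne (Subtype.ext h))
      (Finset.mem_inter.mp i.2.choose_spec).2 ?_
    rw [hval]
    exact (Finset.mem_inter.mp j.2.choose_spec).2
  classical
  let Jf : ℕ → Finset ℕ := fun i => (hJfin i).toFinset
  have hJf : ∀ i n, n ∈ Jf i ↔ ((c n).support ∩ I i).Nonempty := fun i n =>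
    Set.Finite.mem_toFinset _
  have stepSel : ∀ M₀ i₀ : ℕ, ∃ i, i₀ < i ∧ ∀ n ∈ Jf i, M₀ < n := by
    intro M₀ i₀
    have hBad : Set.Finite ((⋃ n ∈ Set.Iic M₀, {i | ((c n).support ∩ I i).Nonempty})
        ∪ Set.Iic i₀) :=
      (Set.Finite.biUnion (Set.finite_Iic M₀) fun n _ => hLfin n).union (Set.finite_Iic i₀)
    obtain ⟨i, hi⟩ := hBad.infinite_compl.nonempty
    rw [Set.mem_compl_iff, Set.mem_union] at hi
    push_neg at hi
    refine ⟨i, by simpa [Set.mem_Iic, not_le] using hi.2, ?_⟩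
    intro n hn
    by_contra hMn
    push_neg at hMn
    exact hi.1 (Set.mem_biUnion (Set.mem_Iic.mpr hMn) ((hJf i n).mp hn))
  let sfun : ℕ → ℕ × ℕ := fun k => Nat.rec
    ((stepSel 0 0).choose, (Jf (stepSel 0 0).choose).sup id)
    (fun _ p => ((stepSel p.2 p.1).choose,
      max p.2 ((Jf (stepSel p.2 p.1).choose).sup id))) k
  have hgt : ∀ k, ∀ n ∈ Jf ((sfun (k+1)).1), (sfun k).2 < n := fun k =>
    (stepSel (sfun k).2 (sfun k).1).choose_spec.2
  have hbound : ∀ k, ∀ n ∈ Jf ((sfun k).1), n ≤ (sfun k).2 := by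
    intro k
    cases k with
    | zero => exact fun n hn => Finset.le_sup (f := id) hn
    | succ k => exact fun n hn => le_trans (Finset.le_sup (f := id) hn) (le_max_right _ _)
  have hMmono : Monotone (fun k => (sfun k).2) :=
    monotone_nat_of_le_succ (fun k => le_max_left _ _)
  have hι : StrictMono (fun k => (sfun k).1) :=
    strictMono_nat_of_lt_succ (fun k => (stepSel (sfun k).2 (sfun k).1).choose_spec.1)
  refine ⟨fun k => Jf ((sfun k).1), ?_, ?_⟩
  · intro k l hkl a ha b hb
    have h1 : a ≤ (sfun k).2 := hbound k a ha
    have h2 : (sfun (l-1)).2 < b := by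
      have h3 := hgt (l-1)
      have hl : l - 1 + 1 = l := by omega
      rw [hl] at h3
      exact h3 b hb
    have h4 : (sfun k).2 ≤ (sfun (l-1)).2 := hMmono (by omega)
    omega
  · intro A hA hEmb
    obtain ⟨T₀, c₀, hc₀, hT₀⟩ := hEmb
    apply hIprop ((fun k => (sfun k).1) '' A) (hA.image (hι.injective.injOn))
    set S' : Set ℕ := ⋃ j ∈ (fun k => (sfun k).1) '' A, ((I j : Finset ℕ) : Set ℕ) with hS'
    set B : Set ℕ := (⋃ i ∈ A, ((Jf ((sfun i).1) : Finset ℕ) : Set ℕ))ᶜ with hB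
    have hEsub : ∀ n ∈ B, ((c n).support : Set ℕ) ⊆ S'ᶜ := by
      intro n hn p hp hpS
      rw [hS', Set.mem_iUnion₂] at hpS
      obtain ⟨j, hj, hpj⟩ := hpS
      obtain ⟨k, hk, rfl⟩ := hj
      exact hn (Set.mem_iUnion₂.mpr ⟨k, hk, Finset.mem_coe.mpr ((hJf _ n).mpr
        ⟨p, Finset.mem_inter.mpr ⟨Finset.mem_coe.mp hp, Finset.mem_coe.mp hpj⟩⟩)⟩)
    have hli : LinearIndependent ℝ v := indep_of_basic v hnorm hbin
    have hliB : LinearIndependent ℝ (fun p : ↥B => v ↑p) :=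
      hli.comp (Subtype.val : ↥B → ℕ) Subtype.val_injective
    set V : Submodule ℝ X := Submodule.span ℝ (Set.range fun p : ↥B => v ↑p) with hV
    have hcoord : ∀ j : ↥B, ∃ g : X →L[ℝ] ℝ, (∀ u : V, g u = hliB.repr u j) ∧ ‖g‖ ≤ 4 := by
      intro j
      have hbd : ∀ u : V, ‖((Finsupp.lapply j : (↥B →₀ ℝ) →ₗ[ℝ] ℝ).comp
          (hliB.repr : V →ₗ[ℝ] (↥B →₀ ℝ))) u‖ ≤ 4 * ‖u‖ := by
        intro u
        have h1 := coeff_bound v hnorm hbin B (hliB.repr u) j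
        rw [hliB.linearCombination_repr u] at h1
        simpa [Real.norm_eq_abs, Submodule.coe_norm] using h1
      obtain ⟨g, hg1, hg2⟩ := exists_extension_norm_eq V
        (LinearMap.mkContinuous _ 4 hbd)
      refine ⟨g, fun u => ?_, le_of_eq_of_le hg2 (LinearMap.mkContinuous_norm_le _ (by norm_num) _)⟩
      rw [hg1 u]
      rfl
    choose φ hφ1 hφ2 using hcoord
    set d : ℕ → X := fun n => v n - vecOf e (c n) with hd
    set gop : ℕ → (X →L[ℝ] X) := fun n =>
      if h : n ∈ B then (φ ⟨n, h⟩).smulRight (d n) else 0 with hgop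
    have hgople : ∀ n, ‖gop n‖ ≤ (1/4) * (1/2)^n := by
      intro n
      simp only [hgop]
      by_cases h : n ∈ B
      · rw [dif_pos h, ContinuousLinearMap.norm_smulRight_apply]
        have h3 : ‖d n‖ ≤ eta n := by simp only [hd]; exact happrox n
        calc ‖φ ⟨n,h⟩‖ * ‖d n‖ ≤ 4 * eta n :=
          mul_le_mul (hφ2 ⟨n,h⟩) h3 (norm_nonneg _) (by norm_num)
        _ = (1/4) * (1/2)^n := by rw [eta]; ring
      · rw [dif_neg h, norm_zero]
        positivity
    have hsumbound : Summable (fun n => (1/4:ℝ) * (1/2)^n) := summable_half.mul_left _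
    have hgsum : Summable gop := Summable.of_norm_bounded hsumbound hgople
    set D : X →L[ℝ] X := ∑' n, gop n with hD
    have hDnorm : ‖D‖ ≤ 1/2 := by
      have h1 : Summable (fun n => ‖gop n‖) :=
        Summable.of_nonneg_of_le (fun n => norm_nonneg _) hgople hsumbound
      calc ‖D‖ ≤ ∑' n, ‖gop n‖ := norm_tsum_le_tsum_norm h1
      _ ≤ ∑' n, (1/4:ℝ) * (1/2)^n := Summable.tsum_le_tsum hgople h1 hsumbound
      _ = (1/4) * 2 := by rw [tsum_mul_left, tsum_geometric_two]
      _ = 1/2 := by norm_num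
    set T : X →L[ℝ] X := ContinuousLinearMap.id ℝ X - D with hT
    have hTsub : ∀ x : X, T x = x - D x := fun x => rfl
    have hTlow : ∀ x : X, (1/2) * ‖x‖ ≤ ‖T x‖ := by
      intro x
      have h1 : ‖D x‖ ≤ (1/2) * ‖x‖ :=
        le_trans (D.le_opNorm x) (mul_le_mul_of_nonneg_right hDnorm (norm_nonneg _))
      have h2 : ‖x‖ - ‖D x‖ ≤ ‖x - D x‖ := norm_sub_norm_le _ _
      rw [hTsub]
      linarith
    have hDapp : ∀ u : X, D u = ∑' n, gop n u := by
      intro u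
      have h1 := (ContinuousLinearMap.apply ℝ X u).map_tsum hgsum
      simpa using h1
    have hTV : ∀ u, ∀ hu : u ∈ V, T u ∈ Submodule.span ℝ (e '' S'ᶜ) := by
      intro u hu
      set l := hliB.repr ⟨u, hu⟩ with hl
      set r : ℕ → ℝ := fun n => if h : n ∈ B then l ⟨n, h⟩ else 0 with hr
      set Fs := l.support.image (Subtype.val : ↥B → ℕ) with hFs
      have hFsB : ∀ n ∈ Fs, n ∈ B := by
        intro n hn
        obtain ⟨p, _, rfl⟩ := Finset.mem_image.mp hn
        exact p.2
      have hgopval : ∀ n (hnB : n ∈ B), gop n u = l ⟨n, hnB⟩ • d n := by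
        intro n hnB
        simp only [hgop]
        rw [dif_pos hnB, ContinuousLinearMap.smulRight_apply]
        congr 1
        rw [hφ1 ⟨n, hnB⟩ ⟨u, hu⟩]
      have hDu : D u = ∑ n ∈ Fs, r n • d n := by
        rw [hDapp]
        rw [tsum_eq_sum (s := Fs) ?_]
        · refine Finset.sum_congr rfl (fun n hn => ?_)
          have hnB := hFsB n hn
          rw [hgopval n hnB]
          congr 1
          show l ⟨n, hnB⟩ = if h : n ∈ B then l ⟨n, h⟩ else 0
          rw [dif_pos hnB]
        · intro n hn
          by_cases hnB : n ∈ B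
          · rw [hgopval n hnB]
            have hns : (⟨n, hnB⟩ : ↥B) ∉ l.support := fun hmem =>
              hn (Finset.mem_image.mpr ⟨_, hmem, rfl⟩)
            rw [Finsupp.notMem_support_iff.mp hns, zero_smul]
          · simp only [hgop]
            rw [dif_neg hnB]
            rfl
      have huval : u = ∑ n ∈ Fs, r n • v n := by
        have h1 := hliB.linearCombination_repr ⟨u, hu⟩
        rw [Finsupp.linearCombination_apply, Finsupp.sum] at h1
        have h2 : (∑ n ∈ Fs, r n • v n) = ∑ p ∈ l.support, l p • v ↑p := by
          rw [hFs, Finset.sum_image (fun x _ y _ h => Subtype.val_injective h)]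
          refine Finset.sum_congr rfl (fun p _ => ?_)
          congr 1
          rw [hr]
          simp
        rw [h2, h1]
      have hTu : T u = ∑ n ∈ Fs, r n • vecOf e (c n) := by
        rw [hTsub, hDu]
        conv_lhs => rw [huval]
        rw [← Finset.sum_sub_distrib]
        refine Finset.sum_congr rfl (fun n _ => ?_)
        rw [← smul_sub]
        congr 1
        simp only [hd]
        abel
      rw [hTu]
      exact sum_mem (fun n hn => Submodule.smul_mem _ _
        (vecOf_mem_span e (hEsub n (hFsB n hn))))
    have hwz2 : ∀ wz : ↥(spanCompl (fun n => (⟨v n, hmem n⟩ : Z))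
        (⋃ i ∈ A, ((Jf ((sfun i).1) : Finset ℕ) : Set ℕ))),
        ((wz : ↥Z) : X) ∈ closure (V : Set X) := by
      intro wz
      have h2 : (wz : ↥Z) ∈ closure ((Submodule.span ℝ
          ((fun n => (⟨v n, hmem n⟩ : Z)) '' B) : Submodule ℝ ↥Z) : Set ↥Z) := by
        rw [← Submodule.topologicalClosure_coe, hB]
        exact wz.2
      have h4 : ((wz : ↥Z) : X) ∈ closure ((Subtype.val : ↥Z → X) ''
          ((Submodule.span ℝ ((fun n => (⟨v n, hmem n⟩ : Z)) '' B) : Submodule ℝ ↥Z) : Set ↥Z)) :=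
        image_closure_subset_closure_image continuous_subtype_val ⟨_, h2, rfl⟩
      have h6 : Submodule.map Z.subtype
          (Submodule.span ℝ ((fun n => (⟨v n, hmem n⟩ : Z)) '' B)) = V := by
        rw [Submodule.map_span, hV]
        congr 1
        rw [Set.image_image, ← Set.image_eq_range]
        exact Set.image_congr' (fun x => rfl)
      have h5 : (Subtype.val : ↥Z → X) ''
          ((Submodule.span ℝ ((fun n => (⟨v n, hmem n⟩ : Z)) '' B) : Submodule ℝ ↥Z) : Set ↥Z)
          = (V : Set X) := by
        rw [← h6, Submodule.map_coe]
        rfl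
      rwa [h5] at h4
    have hmemM : ∀ y : Y, T (((T₀ y : ↥Z) : X)) ∈ spanCompl e S' := by
      intro y
      have h8 : T (((T₀ y : ↥Z) : X)) ∈ closure (T '' (V : Set X)) :=
        image_closure_subset_closure_image T.continuous ⟨_, hwz2 (T₀ y), rfl⟩
      have h9 : closure (T '' (V : Set X)) ⊆
          closure ((Submodule.span ℝ (e '' S'ᶜ) : Submodule ℝ X) : Set X) := by
        apply closure_mono
        rintro _ ⟨u, hu, rfl⟩
        exact hTV u hu
      have h10 := h9 h8
      rw [← Submodule.topologicalClosure_coe] at h10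
      exact h10
    refine ⟨ContinuousLinearMap.codRestrict
      (T.comp (Z.subtypeL.comp ((Submodule.subtypeL _).comp T₀))) (spanCompl e S') hmemM,
      c₀/2, half_pos hc₀, ?_⟩
    intro y
    have h12 : (1/2) * ‖((T₀ y : ↥Z) : X)‖ ≤ ‖T (((T₀ y : ↥Z) : X))‖ := hTlow _
    have h13 : ‖((T₀ y : ↥Z) : X)‖ = ‖T₀ y‖ := rfl
    have h14 := hT₀ y
    have h15 : ‖(ContinuousLinearMap.codRestrict
        (T.comp (Z.subtypeL.comp ((Submodule.subtypeL _).comp T₀))) (spanCompl e S') hmemM) y‖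
        = ‖T (((T₀ y : ↥Z) : X))‖ := rfl
    rw [h15]
    rw [h13] at h12
    calc c₀/2 * ‖y‖ = (1/2) * (c₀ * ‖y‖) := by ring
    _ ≤ (1/2) * ‖T₀ y‖ := mul_le_mul_of_nonneg_left h14 (by norm_num)
    _ ≤ ‖T (((T₀ y : ↥Z) : X))‖ := h12


theorem key [CompleteSpace X] (e : ℕ → X)
    (hbasis : (Submodule.span ℝ (Set.range e)).topologicalClosure = ⊤)
    (htight : TightBasis e) (Z : Submodule ℝ X) (hZ : ¬ FiniteDimensional ℝ Z) :
    ∃ x : ℕ → ↥Z,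
      (∀ (m N : ℕ), m ≤ N → ∀ a : ℕ → ℝ,
        ‖∑ i ∈ Finset.range m, a i • x i‖ ≤ 2 * ‖∑ i ∈ Finset.range N, a i • x i‖) ∧
      (∀ i, x i ≠ 0) ∧ LinearIndependent ℝ x ∧ TightBasis x := by
  obtain ⟨v, c, hmem, hnorm, hnet, happrox, hsucc⟩ := exists_good_seq e Z hbasis hZ
  have hbin := basic_ineq v hnet
  refine ⟨fun n => ⟨v n, hmem n⟩, ?_, ?_, ?_,
    transfer e Z htight v c hmem hnorm hbin happrox hsucc⟩
  · intro m N hmN a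
    have h1 := hbin a m N hmN
    have hco : ∀ n, ((∑ i ∈ Finset.range n, a i • (⟨v i, hmem i⟩ : Z) : ↥Z) : X)
        = ∑ i ∈ Finset.range n, a i • v i := by
      intro n
      rw [show ((∑ i ∈ Finset.range n, a i • (⟨v i, hmem i⟩ : Z) : ↥Z) : X)
        = Z.subtype (∑ i ∈ Finset.range n, a i • (⟨v i, hmem i⟩ : Z)) from rfl, map_sum]
      rfl
    rw [Submodule.coe_norm, Submodule.coe_norm, hco, hco]
    exact h1
  · intro i h
    have h1 : ‖(⟨v i, hmem i⟩ : Z)‖ = 1 := by rw [Submodule.coe_norm]; exact hnorm i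
    have h' : (⟨v i, hmem i⟩ : Z) = 0 := h
    rw [h', norm_zero] at h1
    norm_num at h1
  · exact LinearIndependent.of_comp Z.subtype (indep_of_basic v hnorm hbin)

theorem no_minimal [CompleteSpace X] (e : ℕ → X)
    (hbasis : (Submodule.span ℝ (Set.range e)).topologicalClosure = ⊤)
    (htight : TightBasis e) (Z : Submodule ℝ X) (hZc : IsClosed (Z : Set X))
    (hZ : ¬ FiniteDimensional ℝ Z) :
    ¬ ∀ W : Submodule ℝ Z, IsClosed (W : Set Z) → ¬ FiniteDimensional ℝ W →
      Embeds ↥Z ↥W := by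
  intro hmin
  obtain ⟨x, hx2, hxne, hxli, hxtight⟩ := key e hbasis htight Z hZ
  haveI : CompleteSpace ↥Z := hZc.isComplete.completeSpace_coe
  obtain ⟨I, hIsucc, hIprop⟩ := hxtight ↥Z hZ
  have hIdisj : ∀ i j a, i ≠ j → a ∈ I i → a ∈ I j → False := by
    intro i j a hij hi hj
    rcases hij.lt_or_gt with h | h
    · exact lt_irrefl a (hIsucc i j h a hi a hj)
    · exact lt_irrefl a (hIsucc j i h a hj a hi)
  have hex : ∃ A : Set ℕ, A.Infinite ∧
      ((⋃ i ∈ A, ((I i : Finset ℕ) : Set ℕ))ᶜ).Infinite := by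
    by_cases hN : {k | (I k).Nonempty}.Infinite
    · haveI : Infinite ↥{k | (I k).Nonempty} := hN.to_subtype
      set ν := Nat.orderEmbeddingOfSet {k | (I k).Nonempty} with hν
      have hνmem : ∀ t : ℕ, ν t ∈ {k | (I k).Nonempty} := by
        intro t
        have h1 : ν t ∈ Set.range ν := Set.mem_range_self t
        rwa [Nat.orderEmbeddingOfSet_range] at h1
      have hEveninf : {k : ℕ | Even k}.Infinite := by
        apply Set.infinite_of_injective_forall_mem (f := fun n : ℕ => 2*n)
        · intro a b h
          have h' : 2*a = 2*b := h
          omega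
        · intro a
          show Even (2*a)
          exact ⟨a, two_mul a⟩
      refine ⟨ν '' {k | Even k}, hEveninf.image (ν.injective.injOn), ?_⟩
      have hb : ∀ t : ℕ, ∃ a, a ∈ I (ν (2*t+1)) := fun t => hνmem (2*t+1)
      choose b hbmem using hb
      have hbinj : Function.Injective b := by
        intro t t' h
        by_contra hne
        refine hIdisj (ν (2*t+1)) (ν (2*t'+1)) (b t) ?_ (hbmem t) ?_
        · intro hEq
          have := ν.injective hEq
          omega
        · rw [h]; exact hbmem t'
      refine (Set.infinite_range_of_injective hbinj).mono ?_
      rintro a ⟨t, rfl⟩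
      intro hmem'
      rw [Set.mem_iUnion₂] at hmem'
      obtain ⟨j, hj, haj⟩ := hmem'
      obtain ⟨k, hk, rfl⟩ := hj
      refine hIdisj (ν k) (ν (2*t+1)) (b t) ?_ (Finset.mem_coe.mp haj) (hbmem t)
      intro hEq
      have : k = 2*t+1 := ν.injective hEq
      obtain ⟨u, hu⟩ := hk
      omega
    · rw [Set.not_infinite] at hN
      refine ⟨Set.univ, Set.infinite_univ, ?_⟩
      have hfin : (⋃ i ∈ (Set.univ : Set ℕ), ((I i : Finset ℕ) : Set ℕ)).Finite := by
        refine Set.Finite.subset (hN.biUnion (fun k _ => (I k).finite_toSet)) ?_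
        intro a ha
        rw [Set.mem_iUnion₂] at ha ⊢
        obtain ⟨i, _, hai⟩ := ha
        exact ⟨i, ⟨a, Finset.mem_coe.mp hai⟩, hai⟩
      exact hfin.infinite_compl
  obtain ⟨A, hAinf, hCinf⟩ := hex
  have hWfin : ¬ FiniteDimensional ℝ
      (spanCompl x (⋃ i ∈ A, ((I i : Finset ℕ) : Set ℕ))) := by
    intro hfd
    have hxmem : ∀ n : ↥((⋃ i ∈ A, ((I i : Finset ℕ) : Set ℕ))ᶜ),
        x ↑n ∈ spanCompl x (⋃ i ∈ A, ((I i : Finset ℕ) : Set ℕ)) := fun n =>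
      Submodule.le_topologicalClosure _ (subset_span ⟨↑n, n.2, rfl⟩)
    have hliW : LinearIndependent ℝ (fun n : ↥((⋃ i ∈ A, ((I i : Finset ℕ) : Set ℕ))ᶜ) =>
        (⟨x ↑n, hxmem n⟩ : ↥(spanCompl x (⋃ i ∈ A, ((I i : Finset ℕ) : Set ℕ))))) :=
      LinearIndependent.of_comp (spanCompl x (⋃ i ∈ A, ((I i : Finset ℕ) : Set ℕ))).subtype
        (hxli.comp (Subtype.val : ↥((⋃ i ∈ A, ((I i : Finset ℕ) : Set ℕ))ᶜ) → ℕ)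
          Subtype.val_injective)
    haveI := hfd
    haveI := hliW.finite
    exact hCinf (Set.finite_coe_iff.mp inferInstance)
  exact hIprop A hAinf (hmin _ (Submodule.isClosed_topologicalClosure _) hWfin)

end Stmt4Aux

end AuxSec

/-- tightness is hereditary: every infinite-dimensional closed subspace of a
space with a tight basis contains a tight basic sequence; in particular the space
contains no minimal subspace. -/
theorem stmt4 {X : Type} [NormedAddCommGroup X] [NormedSpace ℝ X] [CompleteSpace X]
    (e : ℕ → X)
    (hbasis : (Submodule.span ℝ (Set.range e)).topologicalClosure = ⊤)
    (htight : TightBasis e) :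
    (∀ Z : Submodule ℝ X, IsClosed (Z : Set X) → ¬ FiniteDimensional ℝ Z →
      ∃ x : ℕ → Z,
        (∃ C : ℝ, 1 ≤ C ∧ ∀ (m N : ℕ), m ≤ N → ∀ a : ℕ → ℝ,
          ‖∑ i ∈ Finset.range m, a i • x i‖ ≤ C * ‖∑ i ∈ Finset.range N, a i • x i‖) ∧
        (∀ i, x i ≠ 0) ∧ TightBasis x) ∧
    (∀ Z : Submodule ℝ X, IsClosed (Z : Set X) → ¬ FiniteDimensional ℝ Z →
      ¬ ∀ W : Submodule ℝ Z, IsClosed (W : Set Z) → ¬ FiniteDimensional ℝ W →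
        Embeds ↥Z ↥W) := by
  constructor
  · intro Z hZc hZfd
    obtain ⟨x, hx2, hxne, hxli, hxt⟩ := Stmt4Aux.key e hbasis htight Z hZfd
    exact ⟨x, ⟨2, one_le_two, hx2⟩, hxne, hxt⟩
  · intro Z hZc hZfd
    exact Stmt4Aux.no_minimal e hbasis htight Z hZc hZfd
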